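/- arXiv:2006.14316 — 2 statements merged into one kernel-verified Lean document; each statement's English description precedes it below -/
import Mathlib

section
/- Proposition 2 (uniform Hadamard differentiability of the inverse/quantile map): Let M > 0 and let H_n, H : [0,M] → ℝ be nondecreasing functions, all belonging to 𝔻. Suppose H is differentiable on a neighborhood of m̃ := Ψ(H) ∈ (0,M), with derivative h that is continuous at m̃ and satisfies h(m̃) > 0. Assume (i) there is K > 0 with √n · sup_{x ∈ [0,M]} |H_n(x) − H(x)| ≤ K for all n ∈ ℕ, and (ii) for every a > 0, √n · sup_{|x| ≤ a n^{-1/2}} |H_n(m̃ + x) − H_n(m̃) − H(m̃ + x) + H(m̃)| → 0 as n → ∞. Then for every sequence of functions α_n : [0,M] → ℝ converging uniformly on [0,M] to a bounded function α that is continuous at m̃, and such that H_n + α_n/√n ∈ 𝔻 for all n, one has √n ( Ψ(H_n + α_n/√n) − Ψ(H_n) ) → −α(m̃)/h(m̃) as n → ∞. -/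
open Filter Topology Set

noncomputable section

/-- The inverse (quantile) map `Ψ(H₀) = inf {t ∈ [0,M] : H₀(t) ≥ 1/2}`,
with the convention `inf ∅ = M` (realized by adjoining `M` to the set, which does not
change the infimum when the set is nonempty since it is contained in `[0,M]`). -/
def PsiMap (M : ℝ) (H : ℝ → ℝ) : ℝ :=
  sInf ({t : ℝ | t ∈ Set.Icc 0 M ∧ 1 / 2 ≤ H t} ∪ {M})

/-- Membership in `𝔻`: nondecreasing, right-continuous functions `H₀ : [0,M] → ℝ`
with `H₀(0) < 1/2` and `H₀(M) > 1/2`. -/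
def MemD (M : ℝ) (H : ℝ → ℝ) : Prop :=
  MonotoneOn H (Set.Icc 0 M) ∧
    (∀ t ∈ Set.Ico 0 M, ContinuousWithinAt H (Set.Ici t) t) ∧
    H 0 < 1 / 2 ∧ 1 / 2 < H M

lemma psi_bddBelow {M : ℝ} (hM : 0 ≤ M) (G : ℝ → ℝ) :
    BddBelow ({t : ℝ | t ∈ Set.Icc 0 M ∧ 1 / 2 ≤ G t} ∪ {M}) := by
  refine ⟨0, ?_⟩
  rintro s (⟨⟨h0, _⟩, _⟩ | rfl)
  · exact h0
  · exact hM

lemma psi_nonneg {M : ℝ} (hM : 0 ≤ M) (G : ℝ → ℝ) : 0 ≤ PsiMap M G := by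
  refine le_csInf ⟨M, Or.inr rfl⟩ ?_
  rintro s (⟨⟨h0, _⟩, _⟩ | rfl)
  · exact h0
  · exact hM

lemma psi_le {M : ℝ} (hM : 0 ≤ M) (G : ℝ → ℝ) {t : ℝ} (ht : t ∈ Set.Icc (0:ℝ) M)
    (hG : 1 / 2 ≤ G t) : PsiMap M G ≤ t :=
  csInf_le (psi_bddBelow hM G) (Or.inl ⟨ht, hG⟩)

lemma psi_le_M {M : ℝ} (hM : 0 ≤ M) (G : ℝ → ℝ) : PsiMap M G ≤ M :=
  csInf_le (psi_bddBelow hM G) (Or.inr rfl)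

lemma lt_psi_lt_half {M : ℝ} (hM : 0 ≤ M) (G : ℝ → ℝ) {t : ℝ} (ht : t ∈ Set.Icc (0:ℝ) M)
    (h : t < PsiMap M G) : G t < 1 / 2 := by
  by_contra hc
  exact absurd (psi_le hM G ht (not_lt.mp hc)) (not_le.mpr h)

lemma le_psi {M : ℝ} (G : ℝ → ℝ) {s : ℝ} (hsM : s ≤ M)
    (hlt : ∀ t ∈ Set.Icc (0:ℝ) M, t < s → G t < 1 / 2) : s ≤ PsiMap M G := by
  refine le_csInf ⟨M, Or.inr rfl⟩ ?_
  rintro b (⟨hb, hGb⟩ | rfl)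
  · by_contra hc
    exact absurd hGb (not_le.mpr (hlt b hb (not_le.mp hc)))
  · exact hsM

lemma half_le_psi_apply {M : ℝ} (hM : 0 < M) {G : ℝ → ℝ} (hG : MemD M G) :
    1 / 2 ≤ G (PsiMap M G) := by
  obtain ⟨hmono, hrc, h0, hMhalf⟩ := hG
  set p := PsiMap M G with hp
  have hp0 : 0 ≤ p := psi_nonneg hM.le G
  have hpM : p ≤ M := psi_le_M hM.le G
  rcases eq_or_lt_of_le hpM with hpeq | hplt
  · rw [hpeq]; exact hMhalf.le
  · by_contra hc
    push_neg at hc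
    have hrcp : ContinuousWithinAt G (Set.Ici p) p := hrc p ⟨hp0, hplt⟩
    have hev : G ⁻¹' Set.Iio (1 / 2) ∈ 𝓝[≥] p := hrcp (Iio_mem_nhds hc)
    rw [Metric.mem_nhdsWithin_iff] at hev
    obtain ⟨ε, hε0, hεsub⟩ := hev
    -- the set S ∪ {M} has an element < p + ε
    have hne : ({t : ℝ | t ∈ Set.Icc 0 M ∧ 1 / 2 ≤ G t} ∪ {M}).Nonempty := ⟨M, Or.inr rfl⟩
    obtain ⟨b, hb, hbe⟩ := exists_lt_of_csInf_lt hne (by rw [← hp]; linarith : PsiMap M G < p + ε)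
    have hbp : p ≤ b := csInf_le (psi_bddBelow hM.le G) hb
    have hbball : b ∈ Metric.ball p ε ∩ Set.Ici p := by
      constructor
      · rw [Metric.mem_ball, Real.dist_eq, abs_of_nonneg (by linarith)]
        linarith
      · exact hbp
    have hbio : G b < 1 / 2 := hεsub hbball
    rcases hb with ⟨_, hGb⟩ | rfl
    · exact absurd hGb (not_le.mpr hbio)
    · exact absurd hMhalf (not_lt.mpr hbio.le)

lemma mvt_abs_bound {H h : ℝ → ℝ} {m r d δ : ℝ} (hδ0 : 0 ≤ δ)
    (hder : ∀ z ∈ Metric.ball m r, HasDerivAt H (h z) z)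
    (hcl : ∀ z ∈ Metric.ball m r, |h z - d| ≤ δ)
    {x y : ℝ} (hx : x ∈ Metric.ball m r) (hy : y ∈ Metric.ball m r) :
    |H y - H x - d * (y - x)| ≤ δ * |y - x| := by
  have key : ∀ x y : ℝ, x ∈ Metric.ball m r → y ∈ Metric.ball m r → x < y →
      |H y - H x - d * (y - x)| ≤ δ * |y - x| := by
    intro x y hx hy hxy
    have hsub : Set.Icc x y ⊆ Metric.ball m r := by
      rw [← segment_eq_Icc hxy.le]
      exact (convex_ball m r).segment_subset hx hy
    obtain ⟨ξ, hξ, hslope⟩ := exists_hasDerivAt_eq_slope H h hxy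
      (fun z hz => ((hder z (hsub hz)).continuousAt).continuousWithinAt)
      (fun z hz => hder z (hsub (Set.Ioo_subset_Icc_self hz)))
    have heq : H y - H x = h ξ * (y - x) :=
      (div_eq_iff (sub_ne_zero.mpr hxy.ne')).mp hslope.symm
    have h1 : |H y - H x - d * (y - x)| = |h ξ - d| * |y - x| := by
      rw [heq, ← abs_mul]; ring_nf
    rw [h1]
    exact mul_le_mul_of_nonneg_right
      (hcl ξ (hsub ⟨hξ.1.le, hξ.2.le⟩)) (abs_nonneg _)
  rcases lt_trichotomy x y with hlt | heq | hgt
  · exact key x y hx hy hlt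
  · subst heq; simp
  · have := key y x hy hx hgt
    have h2 : |H y - H x - d * (y - x)| = |H x - H y - d * (x - y)| := by
      rw [← abs_neg]; ring_nf
    rw [h2, abs_sub_comm y x] at *
    linarith [this]

set_option maxHeartbeats 2000000 in
/-- **Proposition 2** (uniform Hadamard differentiability of the inverse/quantile map).
Let `H_n, H ∈ 𝔻` be nondecreasing on `[0,M]`, `H` differentiable on a neighborhood of
`mt = Ψ(H) ∈ (0,M)` with derivative `h` continuous at `mt` and `h(mt) > 0`. If
(i) `√n sup_{[0,M]} |H_n − H| ≤ K` for all `n` and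
(ii) `√n sup_{|x| ≤ a/√n} |H_n(mt+x) − H_n(mt) − H(mt+x) + H(mt)| → 0` for every `a > 0`,
then for every sequence `α_n` converging uniformly on `[0,M]` to a bounded function `α`
continuous at `mt`, with `H_n + α_n/√n ∈ 𝔻`, one has
`√n (Ψ(H_n + α_n/√n) − Ψ(H_n)) → −α(mt)/h(mt)`. -/
theorem prop2_uniform_hadamard_differentiability
    (M : ℝ) (hM : 0 < M)
    (Hn : ℕ → ℝ → ℝ) (H : ℝ → ℝ)
    (hHnD : ∀ n, MemD M (Hn n)) (hHD : MemD M H)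
    (mt : ℝ) (hmt : mt = PsiMap M H) (hmtmem : mt ∈ Set.Ioo 0 M)
    -- `H` is differentiable on a neighborhood of `mt` with derivative `h`,
    -- `h` continuous at `mt` and `h(mt) > 0`
    (h : ℝ → ℝ) (hdiff : ∀ᶠ x in 𝓝 mt, HasDerivAt H (h x) x)
    (hcont : ContinuousAt h mt) (hpos : 0 < h mt)
    -- (i)
    (K : ℝ) (hK : 0 < K)
    (hi : ∀ n : ℕ, ∀ x ∈ Set.Icc (0 : ℝ) M, Real.sqrt n * |Hn n x - H x| ≤ K)
    -- (ii)
    (hii : ∀ a > (0 : ℝ), ∀ ε > (0 : ℝ), ∃ N : ℕ, ∀ n ≥ N, ∀ x : ℝ,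
      |x| ≤ a / Real.sqrt n →
        Real.sqrt n * |Hn n (mt + x) - Hn n mt - H (mt + x) + H mt| ≤ ε)
    -- the perturbations `α_n → α` uniformly on `[0,M]`, `α` bounded and continuous at `mt`
    (αn : ℕ → ℝ → ℝ) (α : ℝ → ℝ)
    (hαu : TendstoUniformlyOn αn α atTop (Set.Icc 0 M))
    (hαb : ∃ B : ℝ, ∀ x ∈ Set.Icc (0 : ℝ) M, |α x| ≤ B)
    (hαc : ContinuousAt α mt)
    (hmem : ∀ n, MemD M (fun x => Hn n x + αn n x / Real.sqrt n)) :
    Tendsto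
      (fun n : ℕ => Real.sqrt n *
        (PsiMap M (fun x => Hn n x + αn n x / Real.sqrt n) - PsiMap M (Hn n)))
      atTop (𝓝 (-α mt / h mt)) := by
  set d := h mt with hd
  have hd0 : 0 < d := hpos
  obtain ⟨B, hB⟩ := hαb
  have hB0 : 0 ≤ B := (abs_nonneg _).trans (hB 0 ⟨le_refl 0, hM.le⟩)
  -- H(mt) = 1/2
  have hHmt_ge : 1 / 2 ≤ H mt := by rw [hmt]; exact half_le_psi_apply hM hHD
  have hcontH : ContinuousAt H mt := (hdiff.self_of_nhds).continuousAt
  have hHmt : H mt = 1 / 2 := by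
    refine le_antisymm ?_ hHmt_ge
    by_contra hc
    push_neg at hc
    have hev : ∀ᶠ y in 𝓝 mt, 1 / 2 < H y := hcontH.eventually (lt_mem_nhds hc)
    rw [Metric.eventually_nhds_iff] at hev
    obtain ⟨ε, hε0, hεsub⟩ := hev
    set y := mt - min (ε / 2) (mt / 2) with hy
    have hymem : y ∈ Set.Icc (0:ℝ) M := by
      constructor
      · have : min (ε / 2) (mt / 2) ≤ mt / 2 := min_le_right _ _
        simp only [hy]; linarith [hmtmem.1]
      · simp only [hy]
        have : 0 < min (ε / 2) (mt / 2) := lt_min (by linarith) (by linarith [hmtmem.1])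
        linarith [hmtmem.2]
    have hylt : y < mt := by
      have : 0 < min (ε / 2) (mt / 2) := lt_min (by linarith) (by linarith [hmtmem.1])
      simp only [hy]; linarith
    have hydist : dist y mt < ε := by
      rw [Real.dist_eq, hy]
      have h1 : min (ε / 2) (mt / 2) ≤ ε / 2 := min_le_left _ _
      have h2 : 0 < min (ε / 2) (mt / 2) := lt_min (by linarith) (by linarith [hmtmem.1])
      rw [abs_of_nonpos (by linarith)]
      linarith
    have := hεsub hydist
    have := lt_psi_lt_half hM.le H hymem (by rw [← hmt]; exact hylt)
    linarith
  -- window r₁ : derivative + inside (0,M) + h within d/2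
  have hcomb : ∀ᶠ x in 𝓝 mt, HasDerivAt H (h x) x ∧ x ∈ Set.Ioo 0 M ∧ |h x - d| ≤ d / 2 := by
    have h2 : ∀ᶠ y in 𝓝 d, |y - d| ≤ d / 2 :=
      eventually_of_mem (Metric.closedBall_mem_nhds d (half_pos hd0))
        (fun y hy => by rw [Metric.mem_closedBall, Real.dist_eq] at hy; exact hy)
    exact hdiff.and ((isOpen_Ioo.eventually_mem hmtmem).and (hcont.eventually h2))
  rw [Metric.eventually_nhds_iff] at hcomb
  obtain ⟨r₁, hr₁0, hr₁⟩ := hcomb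
  have hball₁ : ∀ z ∈ Metric.ball mt r₁, HasDerivAt H (h z) z ∧ z ∈ Set.Ioo 0 M ∧ |h z - d| ≤ d / 2 :=
    fun z hz => hr₁ (Metric.mem_ball.mp hz)
  -- the consistency lemma
  have keyB : ∀ G : ℝ → ℝ, MemD M G → ∀ η : ℝ, 0 ≤ η →
      (∀ x ∈ Set.Icc (0:ℝ) M, |G x - H x| ≤ η) → 4 * η / d < r₁ / 2 →
      |PsiMap M G - mt| ≤ 4 * η / d := by
    intro G hG η hη0 hclose hsmall
    set q := 4 * η / d with hqdef
    have hq0 : 0 ≤ q := by positivity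
    have hdq : d * q = 4 * η := by rw [hqdef]; field_simp
    have hder : ∀ z ∈ Metric.ball mt r₁, HasDerivAt H (h z) z := fun z hz => (hball₁ z hz).1
    have hcl : ∀ z ∈ Metric.ball mt r₁, |h z - d| ≤ d / 2 := fun z hz => (hball₁ z hz).2.2
    have hmtball : mt ∈ Metric.ball mt r₁ := Metric.mem_ball_self hr₁0
    -- upper bound
    have hupper : PsiMap M G ≤ mt + q := by
      have htball : mt + q ∈ Metric.ball mt r₁ := by
        rw [Metric.mem_ball, Real.dist_eq, add_sub_cancel_left, abs_of_nonneg hq0]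
        linarith
      have htIcc : mt + q ∈ Set.Icc (0:ℝ) M :=
        Set.Ioo_subset_Icc_self (hball₁ _ htball).2.1
      have hmvt := mvt_abs_bound (by linarith : (0:ℝ) ≤ d / 2) hder hcl hmtball htball
      rw [add_sub_cancel_left, abs_of_nonneg hq0] at hmvt
      have hHt : 1 / 2 + 2 * η ≤ H (mt + q) := by
        have := (abs_le.mp hmvt).1
        nlinarith [hHmt]
      have hGt : 1 / 2 ≤ G (mt + q) := by
        have := (abs_le.mp (hclose _ htIcc)).1
        linarith
      exact psi_le hM.le G htIcc hGt
    -- lower bound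
    have hlower : mt - q ≤ PsiMap M G := by
      refine le_psi G (by linarith [hmtmem.2]) ?_
      intro t' ht' hts
      set w := max t' (mt - r₁ / 2) with hwdef
      have hwlt : w < mt - q := max_lt hts (by linarith)
      have hwball : w ∈ Metric.ball mt r₁ := by
        rw [Metric.mem_ball, Real.dist_eq, abs_of_nonpos (by linarith)]
        have : mt - r₁ / 2 ≤ w := le_max_right _ _
        linarith
      have hwIcc : w ∈ Set.Icc (0:ℝ) M := Set.Ioo_subset_Icc_self (hball₁ _ hwball).2.1
      have hmvt := mvt_abs_bound (by linarith : (0:ℝ) ≤ d / 2) hder hcl hmtball hwball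
      have habs : |w - mt| = mt - w := by rw [abs_of_nonpos (by linarith)]; ring
      rw [habs] at hmvt
      have hHw : H w < 1 / 2 - 2 * η := by
        have := (abs_le.mp hmvt).2
        nlinarith [hHmt]
      have hGw : G w < 1 / 2 := by
        have := (abs_le.mp (hclose _ hwIcc)).2
        linarith
      calc G t' ≤ G w := hG.1 ht' hwIcc (le_max_left _ _)
        _ < 1 / 2 := hGw
    rw [abs_le]
    constructor <;> linarith
  -- sqrt n → ∞ and q/√n → 0
  have hsq : Tendsto (fun n : ℕ => Real.sqrt n) atTop atTop := by
    refine tendsto_atTop.mpr fun b => ?_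
    filter_upwards [eventually_ge_atTop (⌈b⌉₊ ^ 2)] with n hn
    calc b ≤ (⌈b⌉₊ : ℝ) := Nat.le_ceil b
      _ = Real.sqrt (((⌈b⌉₊ : ℝ)) ^ 2) := (Real.sqrt_sq (Nat.cast_nonneg _)).symm
      _ ≤ Real.sqrt n := Real.sqrt_le_sqrt (by exact_mod_cast hn)
  have hdivsmall : ∀ q b : ℝ, 0 < b → ∀ᶠ n : ℕ in atTop, q / Real.sqrt n < b := by
    intro q b hb
    exact (Tendsto.div_atTop tendsto_const_nhds hsq).eventually_lt_const hb
  set C := 4 * (K + B + 1) / d with hCdef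
  have hC0 : 0 < C := by positivity
  clear_value C
  rw [Metric.tendsto_atTop]
  intro ε hε
  set ε' := ε / 2 with hε'def
  have hε'0 : 0 < ε' := by positivity
  set c := -α mt / d with hcdef
  have hdc : d * c = -α mt := by rw [hcdef]; field_simp <;> ring
  clear_value c
  set a := C + |c| + ε' + 2 with hadef
  have ha0 : 0 < a := by positivity
  clear_value a
  set e := min d (d * ε' / 10) with hedef
  have he0 : 0 < e := lt_min hd0 (by positivity)
  have hed : e ≤ d := min_le_left _ _
  have he10 : e ≤ d * ε' / 10 := min_le_right _ _
  clear_value e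
  set δ := min (d * ε' / (2 * (|c| + ε'))) (d * ε' / (4 * a)) with hδdef
  have hδ0 : 0 < δ := lt_min (by positivity) (by positivity)
  have hδ1 : δ * (|c| + ε') ≤ d * ε' / 2 := by
    have h1 : δ ≤ d * ε' / (2 * (|c| + ε')) := min_le_left _ _
    have h2 : (0:ℝ) < |c| + ε' := by positivity
    have h3 := mul_le_mul_of_nonneg_right h1 h2.le
    have h4 : d * ε' / (2 * (|c| + ε')) * (|c| + ε') = d * ε' / 2 := by field_simp <;> ring
    linarith
  have hδ2 : 2 * a * δ ≤ d * ε' / 2 := by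
    have h1 : δ ≤ d * ε' / (4 * a) := min_le_right _ _
    have h3 := mul_le_mul_of_nonneg_left h1 (by positivity : (0:ℝ) ≤ 2 * a)
    have h4 : 2 * a * (d * ε' / (4 * a)) = d * ε' / 2 := by field_simp <;> ring
    linarith
  clear_value δ
  -- radius r₂ ≤ r₁ where |h - d| ≤ δ
  have hδev' : ∀ᶠ y in 𝓝 d, |y - d| ≤ δ :=
    eventually_of_mem (Metric.closedBall_mem_nhds d hδ0)
      (fun y hy => by rw [Metric.mem_closedBall, Real.dist_eq] at hy; exact hy)
  have hδev : ∀ᶠ x in 𝓝 mt, |h x - d| ≤ δ := hcont.eventually hδev'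
  rw [Metric.eventually_nhds_iff] at hδev
  obtain ⟨r₂', hr₂'0, hr₂'⟩ := hδev
  set r₂ := min r₁ r₂' with hr₂def
  have hr₂0 : 0 < r₂ := lt_min hr₁0 hr₂'0
  have hball₂ : ∀ z ∈ Metric.ball mt r₂,
      HasDerivAt H (h z) z ∧ z ∈ Set.Ioo 0 M ∧ |h z - d| ≤ δ := by
    intro z hz
    rw [Metric.mem_ball] at hz
    have h1 := hr₁ (lt_of_lt_of_le hz (min_le_left _ _))
    exact ⟨h1.1, h1.2.1, hr₂' (lt_of_lt_of_le hz (min_le_right _ _))⟩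
  have hder₂ : ∀ z ∈ Metric.ball mt r₂, HasDerivAt H (h z) z := fun z hz => (hball₂ z hz).1
  have hcl₂ : ∀ z ∈ Metric.ball mt r₂, |h z - d| ≤ δ := fun z hz => (hball₂ z hz).2.2
  clear_value r₂
  -- continuity radius for α
  obtain ⟨ρ, hρ0, hρ⟩ : ∃ ρ > (0:ℝ), ∀ y : ℝ, |y - mt| < ρ → |α y - α mt| ≤ e := by
    obtain ⟨ρ, hρ0, hρ⟩ := Metric.continuousAt_iff.mp hαc e he0
    exact ⟨ρ, hρ0, fun y hy => (hρ (show dist y mt < ρ by rwa [Real.dist_eq])).le⟩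
  obtain ⟨N₂, hN₂⟩ := hii a ha0 e he0
  have hcs : |c + ε'| ≤ |c| + ε' := by
    calc |c + ε'| ≤ |c| + |ε'| := abs_add_le _ _
      _ = |c| + ε' := by rw [abs_of_pos hε'0]
  have hcs' : |c - ε'| ≤ |c| + ε' := by
    calc |c - ε'| ≤ |c| + |ε'| := abs_sub _ _
      _ = |c| + ε' := by rw [abs_of_pos hε'0]
  have hev : ∀ᶠ n : ℕ in atTop,
      dist (Real.sqrt n * (PsiMap M (fun x => Hn n x + αn n x / Real.sqrt n)
        - PsiMap M (Hn n))) c < ε := by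
    filter_upwards [eventually_ge_atTop 1, eventually_atTop.mpr ⟨N₂, hN₂⟩,
      Metric.tendstoUniformlyOn_iff.mp hαu 1 one_pos,
      Metric.tendstoUniformlyOn_iff.mp hαu e he0,
      hdivsmall a r₂ hr₂0, hdivsmall a ρ hρ0,
      hdivsmall (4 * (K + B + 1) / d) (r₁ / 2) (by positivity)]
      with n hn1 hnii hnα1 hnαe hnar₂ hnaρ hnr₁
    set s := Real.sqrt n with hsdef
    have hs1 : 1 ≤ s := by
      rw [hsdef, show (1:ℝ) = Real.sqrt 1 from (Real.sqrt_one).symm]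
      exact Real.sqrt_le_sqrt (by exact_mod_cast hn1)
    have hs0 : 0 < s := lt_of_lt_of_le one_pos hs1
    clear_value s
    set G : ℝ → ℝ := fun x => Hn n x + αn n x / s with hGdef
    have hGD : MemD M G := by rw [hGdef, hsdef]; exact hmem n
    clear_value G
    set Ψ₁ := PsiMap M (Hn n) with hΨ₁def
    set Ψ₂ := PsiMap M G with hΨ₂def
    clear_value Ψ₁ Ψ₂
    -- pointwise closeness of Hn and G to H
    have hHnclose : ∀ x ∈ Set.Icc (0:ℝ) M, |Hn n x - H x| ≤ K / s := by
      intro x hx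
      have hx' := hi n x hx
      rw [← hsdef] at hx'
      rw [le_div_iff₀ hs0, mul_comm]
      exact hx'
    have hαnb : ∀ x ∈ Set.Icc (0:ℝ) M, |αn n x| ≤ B + 1 := by
      intro x hx
      have h1 := hnα1 x hx
      rw [Real.dist_eq] at h1
      have h2 : αn n x = α x + (αn n x - α x) := by ring
      rw [h2]
      calc |α x + (αn n x - α x)| ≤ |α x| + |αn n x - α x| := abs_add_le _ _
        _ ≤ B + 1 := by rw [abs_sub_comm]; linarith only [hB x hx, h1]
    have hGnclose : ∀ x ∈ Set.Icc (0:ℝ) M, |G x - H x| ≤ (K + B + 1) / s := by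
      intro x hx
      have hrw : G x - H x = (Hn n x - H x) + αn n x / s := by
        simp only [hGdef]
        ring
      rw [hrw]
      have h3 : |αn n x / s| ≤ (B + 1) / s := by
        rw [abs_div, abs_of_pos hs0]
        gcongr
        exact hαnb x hx
      calc |(Hn n x - H x) + αn n x / s| ≤ |Hn n x - H x| + |αn n x / s| := abs_add_le _ _
        _ ≤ K / s + (B + 1) / s := add_le_add (hHnclose x hx) h3
        _ = (K + B + 1) / s := by ring
    -- Ψ₁ and Ψ₂ are within C/s of mt
    have hΨ₁close : |Ψ₁ - mt| ≤ C / s := by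
      have hsm : 4 * (K / s) / d < r₁ / 2 := by
        have heq : 4 * (K / s) / d = 4 * K / d / s := by ring
        have h2 : 4 * K / d / s ≤ 4 * (K + B + 1) / d / s := by
          gcongr <;> linarith only [hB0, hK, hd0]
        linarith only [hnr₁, heq ▸ h2]
      have h1 := keyB (Hn n) (hHnD n) (K / s) (by positivity) hHnclose hsm
      rw [← hΨ₁def] at h1
      refine h1.trans ?_
      rw [hCdef]
      have heq : 4 * (K / s) / d = 4 * K / d / s := by ring
      rw [heq]
      gcongr <;> linarith only [hB0, hK, hd0]
    have hΨ₂close : |Ψ₂ - mt| ≤ C / s := by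
      have heq : 4 * ((K + B + 1) / s) / d = 4 * (K + B + 1) / d / s := by ring
      have hsm : 4 * ((K + B + 1) / s) / d < r₁ / 2 := by rw [heq]; exact hnr₁
      have h1 := keyB G hGD ((K + B + 1) / s) (by positivity) hGnclose hsm
      rw [← hΨ₂def] at h1
      refine h1.trans ?_
      rw [hCdef, heq]
    have hCa : C / s ≤ a / s := by
      gcongr
      rw [hadef]
      linarith only [abs_nonneg c, hε'0]
    have hΨ₁w : |Ψ₁ - mt| ≤ a / s := hΨ₁close.trans hCa
    -- window machinery
    have hwin : ∀ z : ℝ, |z - mt| ≤ a / s → z ∈ Metric.ball mt r₂ := by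
      intro z hz
      rw [Metric.mem_ball, Real.dist_eq]
      exact lt_of_le_of_lt hz hnar₂
    have hwinIcc : ∀ z : ℝ, |z - mt| ≤ a / s → z ∈ Set.Icc (0:ℝ) M :=
      fun z hz => Set.Ioo_subset_Icc_self (hball₂ z (hwin z hz)).2.1
    have hiiP : ∀ z : ℝ, |z - mt| ≤ a / s →
        s * |Hn n z - Hn n mt - H z + H mt| ≤ e := by
      intro z hz
      have h1 := hnii (z - mt) hz
      have h2 : mt + (z - mt) = z := by ring
      rw [h2] at h1
      exact h1
    have hiiD : ∀ z w : ℝ, |z - mt| ≤ a / s → |w - mt| ≤ a / s →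
        s * |Hn n z - Hn n w - (H z - H w)| ≤ 2 * e := by
      intro z w hz hw
      have h1 := hiiP z hz
      have h2 := hiiP w hw
      have h3 : |Hn n z - Hn n w - (H z - H w)| ≤
          |Hn n z - Hn n mt - H z + H mt| + |Hn n w - Hn n mt - H w + H mt| := by
        have heq : Hn n z - Hn n w - (H z - H w) =
            (Hn n z - Hn n mt - H z + H mt) - (Hn n w - Hn n mt - H w + H mt) := by ring
        rw [heq]
        exact abs_sub _ _
      have h4 := mul_le_mul_of_nonneg_left h3 hs0.le
      have h5 : s * (|Hn n z - Hn n mt - H z + H mt| + |Hn n w - Hn n mt - H w + H mt|)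
          = s * |Hn n z - Hn n mt - H z + H mt| + s * |Hn n w - Hn n mt - H w + H mt| := by
        ring
      linarith only [h1, h2, h4, h5]
    have hαP : ∀ z : ℝ, z ∈ Set.Icc (0:ℝ) M → |z - mt| ≤ a / s →
        |αn n z - α mt| ≤ 2 * e := by
      intro z hzI hzw
      have h1 := hnαe z hzI
      rw [Real.dist_eq] at h1
      have h2 := hρ z (lt_of_le_of_lt hzw hnaρ)
      have heq : αn n z - α mt = (αn n z - α z) + (α z - α mt) := by ring
      rw [heq]
      calc |(αn n z - α z) + (α z - α mt)| ≤ |αn n z - α z| + |α z - α mt| := abs_add_le _ _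
        _ ≤ 2 * e := by rw [abs_sub_comm]; linarith only [h1, h2]
    -- ===== upper bound : Ψ₂ ≤ Ψ₁ + (c + ε') / s =====
    have hΨ₁ball : Ψ₁ ∈ Metric.ball mt r₂ := hwin Ψ₁ hΨ₁w
    set t1 := Ψ₁ + (c + ε') / s with ht1def
    clear_value t1
    have ht1Ψ : t1 - Ψ₁ = (c + ε') / s := by rw [ht1def]; ring
    have ht1w : |t1 - mt| ≤ a / s := by
      have h1 : t1 - mt = (Ψ₁ - mt) + (c + ε') / s := by rw [ht1def]; ring
      have h2 : |t1 - mt| ≤ |Ψ₁ - mt| + |(c + ε') / s| := by rw [h1]; exact abs_add_le _ _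
      have h3 : |(c + ε') / s| ≤ (|c| + ε') / s := by
        rw [abs_div, abs_of_pos hs0]; gcongr
      have h4 : C / s + (|c| + ε') / s ≤ a / s := by
        rw [← add_div, div_le_div_iff₀ hs0 hs0]
        have hca : C + (|c| + ε') ≤ a := by rw [hadef]; linarith only []
        exact mul_le_mul_of_nonneg_right hca hs0.le
      linarith only [h2, h3, h4, hΨ₁close]
    have ht1Icc : t1 ∈ Set.Icc (0:ℝ) M := hwinIcc t1 ht1w
    have ht1ball : t1 ∈ Metric.ball mt r₂ := hwin t1 ht1w
    have hA1 : 1 / 2 ≤ Hn n Ψ₁ := by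
      have := half_le_psi_apply hM (hHnD n)
      rwa [← hΨ₁def] at this
    have hA2 : -(2 * e) ≤ s * (Hn n t1 - Hn n Ψ₁ - (H t1 - H Ψ₁)) := by
      have h1 := hiiD t1 Ψ₁ ht1w hΨ₁w
      have h2 : |s * (Hn n t1 - Hn n Ψ₁ - (H t1 - H Ψ₁))| ≤ 2 * e := by
        rw [abs_mul, abs_of_pos hs0]; exact h1
      exact (abs_le.mp h2).1
    have hA3 := mvt_abs_bound hδ0.le hder₂ hcl₂ hΨ₁ball ht1ball
    have hA3' : d * (c + ε') - δ * (|c| + ε') ≤ s * (H t1 - H Ψ₁) := by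
      have h2 := (abs_le.mp hA3).1
      have h3 : |t1 - Ψ₁| = |c + ε'| / s := by rw [ht1Ψ, abs_div, abs_of_pos hs0]
      rw [h3, ht1Ψ] at h2
      have h5 := mul_le_mul_of_nonneg_left h2 hs0.le
      have h6 : s * (H t1 - H Ψ₁ - d * ((c + ε') / s)) = s * (H t1 - H Ψ₁) - d * (c + ε') := by
        field_simp <;> ring
      have h7 : s * -(δ * (|c + ε'| / s)) = -(δ * |c + ε'|) := by field_simp <;> ring
      rw [h6, h7] at h5
      have p := mul_le_mul_of_nonneg_left hcs hδ0.le
      linarith only [h5, p]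
    have hA4 : -(2 * e) ≤ αn n t1 - α mt := (abs_le.mp (hαP t1 ht1Icc ht1w)).1
    have hup : 1 / 2 ≤ G t1 := by
      have hkey : 0 ≤ s * (Hn n t1 + αn n t1 / s - 1 / 2) := by
        have hexp : s * (Hn n t1 + αn n t1 / s - 1 / 2)
            = s * (Hn n t1 - Hn n Ψ₁ - (H t1 - H Ψ₁)) + s * (H t1 - H Ψ₁)
              + s * (Hn n Ψ₁ - 1 / 2) + αn n t1 := by
          field_simp <;> ring
        rw [hexp]
        have h8 : 0 ≤ s * (Hn n Ψ₁ - 1 / 2) := mul_nonneg hs0.le (by linarith only [hA1])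
        linarith only [hA2, hA3', h8, hA4, hdc, hδ1, he10, hε'0, hd0,
          mul_pos hd0 hε'0]
      have h9 := div_nonneg hkey hs0.le
      rw [mul_div_cancel_left₀ _ hs0.ne'] at h9
      simp only [hGdef]
      linarith only [h9]
    have hΨ₂t1 : Ψ₂ ≤ t1 := by
      have := psi_le hM.le G ht1Icc hup
      rwa [← hΨ₂def] at this
    -- ===== lower bound : Ψ₁ + (c - ε') / s ≤ Ψ₂ =====
    set sL := Ψ₁ + (c - ε') / s with hsLdef
    clear_value sL
    have hsLΨ : sL - Ψ₁ = (c - ε') / s := by rw [hsLdef]; ring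
    have hsLw : |sL - mt| ≤ a / s := by
      have h1 : sL - mt = (Ψ₁ - mt) + (c - ε') / s := by rw [hsLdef]; ring
      have h2 : |sL - mt| ≤ |Ψ₁ - mt| + |(c - ε') / s| := by rw [h1]; exact abs_add_le _ _
      have h3 : |(c - ε') / s| ≤ (|c| + ε') / s := by
        rw [abs_div, abs_of_pos hs0]; gcongr
      have h4 : C / s + (|c| + ε') / s ≤ a / s := by
        rw [← add_div, div_le_div_iff₀ hs0 hs0]
        have hca : C + (|c| + ε') ≤ a := by rw [hadef]; linarith only []
        exact mul_le_mul_of_nonneg_right hca hs0.le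
      linarith only [h2, h3, h4, hΨ₁close]
    have hsLM : sL ≤ M := by
      have h1 : mt + a / s ∈ Set.Icc (0:ℝ) M := by
        refine hwinIcc _ ?_
        rw [add_sub_cancel_left, abs_of_nonneg (by positivity)]
      have h2 := (abs_le.mp hsLw).2
      linarith only [h2, h1.2]
    have hlow : ∀ t ∈ Set.Icc (0:ℝ) M, t < sL → G t < 1 / 2 := by
      intro t ht hts
      set t₀ := mt - a / s with ht₀def
      clear_value t₀
      have ht₀w : |t₀ - mt| ≤ a / s := by
        rw [ht₀def]
        rw [show mt - a / s - mt = -(a / s) by ring, abs_neg, abs_of_nonneg (by positivity)]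
      have ht₀lt : t₀ < sL := by
        have h1 := (abs_le.mp hΨ₁close).1
        have h2 : -((|c| + ε') / s) ≤ (c - ε') / s := by
          rw [← neg_div]
          exact (div_le_div_iff_of_pos_right hs0).mpr (by linarith only [neg_abs_le c])
        have h3 : a / s - C / s - (|c| + ε') / s = 2 / s := by
          rw [hadef]; ring
        have h4 : (0:ℝ) < 2 / s := by positivity
        rw [ht₀def, hsLdef]
        linarith only [h1, h2, h3, h4]
      set u := max t t₀ with hudef
      have hut : t ≤ u := le_max_left _ _
      have hut₀ : t₀ ≤ u := le_max_right _ _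
      clear_value u
      have hult : u < sL := by rw [hudef]; exact max_lt hts ht₀lt
      have huw : |u - mt| ≤ a / s := by
        rw [abs_le]
        constructor
        · have ht0u : t₀ ≤ u := hut₀
          rw [ht₀def] at ht0u
          linarith only [ht0u]
        · have h2 := (abs_le.mp hsLw).2
          linarith only [hult, h2]
      have huIcc : u ∈ Set.Icc (0:ℝ) M := hwinIcc u huw
      have huball : u ∈ Metric.ball mt r₂ := hwin u huw
      have hmono : G t ≤ G u := hGD.1 ht huIcc hut
      -- auxiliary point v slightly below Ψ₁
      set v := Ψ₁ - e / ((d + δ) * s) with hvdef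
      clear_value v
      have hq0 : 0 < e / ((d + δ) * s) := by positivity
      have hq1 : e / ((d + δ) * s) ≤ 1 / s := by
        rw [div_le_div_iff₀ (by positivity) hs0]
        have p : e * s ≤ (d + δ) * s :=
          mul_le_mul_of_nonneg_right (by linarith only [hed, hδ0]) hs0.le
        linarith only [p]
      have hvΨ : Ψ₁ - v = e / ((d + δ) * s) := by rw [hvdef]; ring
      have hvlt : v < Ψ₁ := by rw [hvdef]; linarith only [hq0]
      have hvw : |v - mt| ≤ a / s := by
        have h1 := abs_le.mp hΨ₁close
        have hCa1 : C / s + 1 / s ≤ a / s := by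
          rw [← add_div, div_le_div_iff₀ hs0 hs0]
          have hca : C + 1 ≤ a := by rw [hadef]; linarith only [abs_nonneg c, hε'0]
          exact mul_le_mul_of_nonneg_right hca hs0.le
        rw [abs_le, hvdef]
        constructor <;>
          [linarith only [h1.1, h1.2, hq0, hq1, hCa1];
           linarith only [h1.1, h1.2, hq0, hq1, hCa1]]
      have hvIcc : v ∈ Set.Icc (0:ℝ) M := hwinIcc v hvw
      have hvball : v ∈ Metric.ball mt r₂ := hwin v hvw
      have hHv : Hn n v < 1 / 2 := by
        refine lt_psi_lt_half hM.le (Hn n) hvIcc ?_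
        rw [← hΨ₁def]
        exact hvlt
      -- (ii) bound between u and v
      have hB2 : s * (Hn n u - Hn n v) ≤ s * (H u - H v) + 2 * e := by
        have h1 := hiiD u v huw hvw
        have h2 : |s * (Hn n u - Hn n v - (H u - H v))| ≤ 2 * e := by
          rw [abs_mul, abs_of_pos hs0]; exact h1
        have h3 := (abs_le.mp h2).2
        linarith only [h3]
      -- MVT bounds
      have hB3a : s * (H u - H Ψ₁) ≤ d * (c - ε') + 2 * a * δ := by
        have hm := (abs_le.mp (mvt_abs_bound hδ0.le hder₂ hcl₂ hΨ₁ball huball)).2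
        -- hm : H u - H Ψ₁ - d * (u - Ψ₁) ≤ δ * |u - Ψ₁|
        have hsu : s * (u - Ψ₁) ≤ c - ε' := by
          have h1 : u - Ψ₁ < (c - ε') / s := by
            rw [← hsLΨ]; linarith only [hult]
          have h2 := mul_le_mul_of_nonneg_left h1.le hs0.le
          have h3 : s * ((c - ε') / s) = c - ε' := by field_simp
          linarith only [h2, h3]
        have hsau : s * |u - Ψ₁| ≤ 2 * a := by
          have h1 : |u - Ψ₁| ≤ |u - mt| + |mt - Ψ₁| := by
            rw [show u - Ψ₁ = (u - mt) + (mt - Ψ₁) by ring]; exact abs_add_le _ _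
          rw [abs_sub_comm mt Ψ₁] at h1
          have h2 : |u - Ψ₁| ≤ 2 * (a / s) := by linarith only [h1, huw, hΨ₁w]
          have h3 := mul_le_mul_of_nonneg_left h2 hs0.le
          have h4 : s * (2 * (a / s)) = 2 * a := by field_simp <;> ring
          linarith only [h3, h4]
        have h5 := mul_le_mul_of_nonneg_left hm hs0.le
        have p1 := mul_le_mul_of_nonneg_left hsu hd0.le
        have p2 := mul_le_mul_of_nonneg_left hsau hδ0.le
        linarith only [h5, p1, p2]
      have hB3b : s * (H Ψ₁ - H v) ≤ e := by
        have hm := (abs_le.mp (mvt_abs_bound hδ0.le hder₂ hcl₂ hvball hΨ₁ball)).2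
        -- hm : H Ψ₁ - H v - d * (Ψ₁ - v) ≤ δ * |Ψ₁ - v|
        have h1 : |Ψ₁ - v| = Ψ₁ - v := abs_of_pos (by linarith only [hvlt])
        rw [h1, hvΨ] at hm
        have h5 := mul_le_mul_of_nonneg_left hm hs0.le
        have h6 : s * (d * (e / ((d + δ) * s)) + δ * (e / ((d + δ) * s))) = e := by
          field_simp <;> ring
        linarith only [h5, h6]
      have hB4 : αn n u ≤ α mt + 2 * e := by
        linarith only [(abs_le.mp (hαP u huIcc huw)).2]
      -- combine
      have hkey2 : s * (Hn n u + αn n u / s - 1 / 2) < 0 := by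
        have hexp : s * (Hn n u + αn n u / s - 1 / 2)
            = (s * (Hn n u - Hn n v)) + (s * Hn n v - s * (1 / 2)) + αn n u := by
          field_simp <;> ring
        rw [hexp]
        have h1 : s * Hn n v < s * (1 / 2) :=
          (mul_lt_mul_iff_right₀ hs0).mpr hHv
        have h2 : s * (H u - H v) = s * (H u - H Ψ₁) + s * (H Ψ₁ - H v) := by ring
        linarith only [hB2, h1, h2, hB3a, hB3b, hB4, hdc, hδ2, he10, hε'0, hd0,
          mul_pos hd0 hε'0]
      have hGu : G u < 1 / 2 := by
        simp only [hGdef]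
        by_contra hcg
        push_neg at hcg
        have h9 : 0 ≤ s * (Hn n u + αn n u / s - 1 / 2) :=
          mul_nonneg hs0.le (by linarith only [hcg])
        linarith only [hkey2, h9]
      calc G t ≤ G u := hmono
        _ < 1 / 2 := hGu
    have hΨ₂sL : sL ≤ Ψ₂ := by
      have := le_psi G hsLM hlow
      rwa [← hΨ₂def] at this
    -- ===== conclusion =====
    have hfin1 : s * (Ψ₂ - Ψ₁) ≤ c + ε' := by
      have h1 : Ψ₂ - Ψ₁ ≤ (c + ε') / s := by linarith only [hΨ₂t1, ht1Ψ]
      have h2 := mul_le_mul_of_nonneg_left h1 hs0.le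
      have h3 : s * ((c + ε') / s) = c + ε' := by field_simp
      linarith only [h2, h3]
    have hfin2 : c - ε' ≤ s * (Ψ₂ - Ψ₁) := by
      have h1 : (c - ε') / s ≤ Ψ₂ - Ψ₁ := by linarith only [hΨ₂sL, hsLΨ]
      have h2 := mul_le_mul_of_nonneg_left h1 hs0.le
      have h3 : s * ((c - ε') / s) = c - ε' := by field_simp
      linarith only [h2, h3]
    rw [Real.dist_eq, abs_lt]
    constructor <;>
      [linarith only [hfin1, hfin2, hε'0, hε'def];
       linarith only [hfin1, hfin2, hε'0, hε'def]]
  exact eventually_atTop.mp hev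

end
end

section
/- Positivity of the limiting noncentrality (key step in the proof of Theorem 1(b)): Let B be a real l×k matrix, Σ a real k×k symmetric positive definite matrix, and m ∈ ℝ^k a vector with Bm ≠ 0. Let P be the Moore–Penrose inverse of B Σ Bᵀ. Then the quadratic form (Bm)ᵀ P (Bm) is strictly positive. -/
open Matrix

/-- **Positivity of the limiting noncentrality** (key step in the proof of Theorem 1(b)).
For a real `l × k` matrix `B`, a symmetric positive definite `k × k` matrix `Σ` and a
vector `m` with `Bm ≠ 0`, if `P` is the Moore–Penrose inverse of `B Σ Bᵀ` (i.e. the four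
Penrose equations hold), then the quadratic form `(Bm)ᵀ P (Bm)` is strictly positive. -/
theorem noncentrality_positivity
    (l k : ℕ) (B : Matrix (Fin l) (Fin k) ℝ) (Sig : Matrix (Fin k) (Fin k) ℝ)
    (hSig : Sig.PosDef) (m : Fin k → ℝ) (hm : B.mulVec m ≠ 0)
    (P : Matrix (Fin l) (Fin l) ℝ)
    (h1 : B * Sig * Bᵀ * P * (B * Sig * Bᵀ) = B * Sig * Bᵀ)
    (h2 : P * (B * Sig * Bᵀ) * P = P)
    (h3 : (B * Sig * Bᵀ * P)ᵀ = B * Sig * Bᵀ * P)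
    (h4 : (P * (B * Sig * Bᵀ))ᵀ = P * (B * Sig * Bᵀ)) :
    0 < B.mulVec m ⬝ᵥ P.mulVec (B.mulVec m) := by
  set E : Matrix (Fin l) (Fin l) ℝ := B * Sig * Bᵀ with hE
  have hSigT : Sigᵀ = Sig := hSig.isHermitian.eq
  have hET : Eᵀ = E := by
    rw [hE, Matrix.transpose_mul, Matrix.transpose_mul, Matrix.transpose_transpose,
      hSigT, Matrix.mul_assoc]
  -- M := E * P * B - B satisfies M * Sig * Mᵀ = 0
  set M : Matrix (Fin l) (Fin k) ℝ := E * P * B - B with hM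
  have hMB : M * Sig * Bᵀ = 0 := by
    rw [hM, Matrix.sub_mul, Matrix.sub_mul]
    have : E * P * B * Sig * Bᵀ = E := by
      calc E * P * B * Sig * Bᵀ = E * P * (B * Sig * Bᵀ) := by
            simp only [Matrix.mul_assoc]
        _ = E := by rw [← hE]; exact h1
    rw [this, sub_eq_zero]
  have hMSM : M * Sig * Mᵀ = 0 := by
    have hMT : Mᵀ = Bᵀ * (Pᵀ * Eᵀ) - Bᵀ := by
      rw [hM, Matrix.transpose_sub, Matrix.transpose_mul, Matrix.transpose_mul]
    rw [hMT, Matrix.mul_sub, ← Matrix.mul_assoc, ← Matrix.mul_assoc, hMB,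
      Matrix.zero_mul, Matrix.zero_mul, sub_zero]
  -- hence M = 0
  have hM0 : M = 0 := by
    ext i j
    by_contra hne
    have hrow : (fun j => M i j) ≠ 0 := by
      intro h0
      exact hne (by simpa using congrFun h0 j)
    have hpos := hSig.dotProduct_mulVec_pos hrow
    have hzero : (M * Sig * Mᵀ) i i = (fun j => M i j) ⬝ᵥ Sig.mulVec (fun j => M i j) := by
      simp only [Matrix.mul_apply, Matrix.mulVec, dotProduct, Matrix.transpose_apply,
        Finset.mul_sum, Finset.sum_mul]
      rw [Finset.sum_comm]
      refine Finset.sum_congr rfl fun a _ => Finset.sum_congr rfl fun b _ => by ring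
    rw [hMSM] at hzero
    simp only [Matrix.zero_apply] at hzero
    rw [show star (fun j => M i j) = (fun j => M i j) from rfl] at hpos
    linarith [hpos, hzero.symm]
  have hEPB : E * P * B = B := by
    have := hM0
    rw [hM, sub_eq_zero] at this
    exact this
  have hEPE : E * (P * E) = E := by
    rw [← Matrix.mul_assoc]; rw [hE] at h1 ⊢; exact h1
  clear_value M
  -- so E *ᵥ x = B *ᵥ m for x := (P * B) *ᵥ m
  set x : Fin l → ℝ := (P * B).mulVec m with hx
  have hEx : E.mulVec x = B.mulVec m := by
    show E.mulVec ((P * B).mulVec m) = B.mulVec m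
    rw [Matrix.mulVec_mulVec, ← Matrix.mul_assoc, hEPB]
  set y : Fin k → ℝ := Bᵀ.mulVec x with hy
  have hyv : y = x ᵥ* B := by rw [hy, Matrix.mulVec_transpose]
  have hBm : (B * Sig).mulVec y = B.mulVec m := by
    rw [hy, Matrix.mulVec_mulVec, ← hE]
    exact hEx
  clear_value y
  clear_value x
  have hvE : E.mulVec x = x ᵥ* E := by
    rw [← Matrix.mulVec_transpose, hET]
  -- the quadratic form equals yᵀ Sig y
  have key : B.mulVec m ⬝ᵥ P.mulVec (B.mulVec m) = y ⬝ᵥ Sig.mulVec y := by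
    rw [← hEx]
    calc E.mulVec x ⬝ᵥ P.mulVec (E.mulVec x)
        = (x ᵥ* E) ⬝ᵥ (P * E).mulVec x := by rw [Matrix.mulVec_mulVec, hvE]
      _ = (x ᵥ* E ᵥ* (P * E)) ⬝ᵥ x := by rw [Matrix.dotProduct_mulVec]
      _ = (x ᵥ* (E * (P * E))) ⬝ᵥ x := by rw [Matrix.vecMul_vecMul]
      _ = (x ᵥ* E) ⬝ᵥ x := by rw [hEPE]
      _ = (x ᵥ* B ᵥ* Sig ᵥ* Bᵀ) ⬝ᵥ x := by
          rw [Matrix.vecMul_vecMul, Matrix.vecMul_vecMul, ← Matrix.mul_assoc, ← hE]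
      _ = (y ᵥ* Sig) ⬝ᵥ Bᵀ.mulVec x := by
          rw [← hyv, ← Matrix.dotProduct_mulVec]
      _ = y ⬝ᵥ Sig.mulVec y := by rw [← hy, ← Matrix.dotProduct_mulVec]
  rw [key]
  have hy0 : y ≠ 0 := by
    intro h0
    apply hm
    rw [← hBm, h0, Matrix.mulVec_zero]
  have := hSig.dotProduct_mulVec_pos hy0
  simpa using this
end
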